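/- Fix the hospitals' common interview capacity at l and suppose preferences are common. If either k' < k ≤ l or l ≤ k < k', then the (l,k')-matching has at least as many blocking pairs and a weakly lower match rate (fraction of matched positions) than the (l,k)-matching. -/

import Mathlib

/- Formal model of the two-step interview-then-match process of
Echenique-et-al-style markets: Step 1 computes the interview matching by
hospital-proposing deferred acceptance (with responsive, capacity-constrained
choice functions); Step 2 computes the final one-to-one matching by
doctor-proposing deferred acceptance on preferences restricted to interview
partners. -/

open Finset

section Model

variable {D H : Type*} [Fintype D] [Fintype H] [DecidableEq D] [DecidableEq H]

/-- The (at most) `n` best elements of `s` according to `rank` (lower rank = better). -/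
def topN {α : Type*} [DecidableEq α] (rank : α → ℕ) (n : ℕ) (s : Finset α) : Finset α :=
  s.filter fun x => (s.filter fun y => rank y < rank x).card < n

/-- A market: strict preferences represented by rank functions
(lower rank = more preferred) together with acceptability predicates. -/
structure Market (D H : Type*) where
  rankDH : D → H → ℕ
  accD : D → H → Bool
  rankHD : H → D → ℕ
  accH : H → D → Bool

/-- Strict preferences: rank functions are injective. -/
def Market.Strict (M : Market D H) : Prop :=
  (∀ d, Function.Injective (M.rankDH d)) ∧ (∀ h, Function.Injective (M.rankHD h))

/-- Hospital `h` proposes to its `ι h` best acceptable doctors that have not rejected it. -/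
def hProps (M : Market D H) (ι : H → ℕ) (R : Finset (H × D)) (h : H) : Finset D :=
  topN (M.rankHD h) (ι h) (univ.filter fun d => M.accH h d ∧ (h, d) ∉ R)

/-- Doctor `d` keeps her `κ d` best acceptable proposals. -/
def dKeeps (M : Market D H) (ι : H → ℕ) (κ : D → ℕ) (R : Finset (H × D)) (d : D) :
    Finset H :=
  topN (fun h => M.rankDH d h) (κ d) (univ.filter fun h => M.accD d h ∧ d ∈ hProps M ι R h)

/-- One round of hospital-proposing deferred acceptance: the (cumulative) rejection set
grows by the proposals not kept. -/
def iStep (M : Market D H) (ι : H → ℕ) (κ : D → ℕ) (R : Finset (H × D)) :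
    Finset (H × D) :=
  R ∪ univ.filter fun p : H × D => p.2 ∈ hProps M ι R p.1 ∧ p.1 ∉ dKeeps M ι κ R p.2

/-- Rejection set at the end of hospital-proposing DA (interview step). -/
def iRej (M : Market D H) (ι : H → ℕ) (κ : D → ℕ) : Finset (H × D) :=
  (iStep M ι κ)^[Fintype.card D * Fintype.card H] ∅

/-- The interview matching (the hospital-optimal stable many-to-many matching) computed
by hospital-proposing deferred acceptance: pairs `(h, d)` such that `h` interviews `d`. -/
def interviews (M : Market D H) (ι : H → ℕ) (κ : D → ℕ) : Finset (H × D) :=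
  univ.filter fun p : H × D =>
    p.2 ∈ hProps M ι (iRej M ι κ) p.1 ∧ p.1 ∈ dKeeps M ι κ (iRej M ι κ) p.2

/-- Doctor `d` proposes to her best interview partner that has not rejected her. -/
def dProps (M : Market D H) (V : Finset (H × D)) (S : Finset (D × H)) (d : D) :
    Finset H :=
  topN (M.rankDH d) 1 (univ.filter fun h => (h, d) ∈ V ∧ (d, h) ∉ S)

/-- Hospital `h` keeps its best proposal. -/
def hKeeps (M : Market D H) (V : Finset (H × D)) (S : Finset (D × H)) (h : H) :
    Finset D :=
  topN (M.rankHD h) 1 (univ.filter fun d => h ∈ dProps M V S d)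

/-- One round of doctor-proposing DA on preferences restricted to the interview matching `V`. -/
def mStep (M : Market D H) (V : Finset (H × D)) (S : Finset (D × H)) : Finset (D × H) :=
  S ∪ univ.filter fun p : D × H => p.2 ∈ dProps M V S p.1 ∧ p.1 ∉ hKeeps M V S p.2

/-- Rejection set at the end of the doctor-proposing DA of the matching step. -/
def mRej (M : Market D H) (V : Finset (H × D)) : Finset (D × H) :=
  (mStep M V)^[Fintype.card D * Fintype.card H] ∅

/-- The final matching: doctor-proposing DA on preferences restricted to interviews `V`. -/
def finalMatch (M : Market D H) (V : Finset (H × D)) : Finset (D × H) :=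
  univ.filter fun p : D × H =>
    p.2 ∈ dProps M V (mRej M V) p.1 ∧ p.1 ∈ hKeeps M V (mRej M V) p.2

/-- The `(ι,κ)`-matching: the culmination of the two-step process. -/
def ikMatching (M : Market D H) (ι : H → ℕ) (κ : D → ℕ) : Finset (D × H) :=
  finalMatch M (interviews M ι κ)

/-- `(d, h)` is a blocking pair of `μ` (w.r.t. the true, unrestricted preferences). -/
def Blocks (M : Market D H) (μ : Finset (D × H)) (d : D) (h : H) : Prop :=
  M.accD d h ∧ M.accH h d ∧ (d, h) ∉ μ ∧
    (∀ h', (d, h') ∈ μ → M.rankDH d h < M.rankDH d h') ∧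
    (∀ d', (d', h) ∈ μ → M.rankHD h d < M.rankHD h d')

instance (M : Market D H) (μ : Finset (D × H)) (d : D) (h : H) :
    Decidable (Blocks M μ d h) := by
  unfold Blocks; infer_instance

/-- A matching is stable if it admits no blocking pair. -/
def Stable (M : Market D H) (μ : Finset (D × H)) : Prop := ∀ d h, ¬ Blocks M μ d h

/-- `(ι,κ)` is adequate at `M` if the `(ι,κ)`-matching is stable. -/
def Adequate (M : Market D H) (ι : H → ℕ) (κ : D → ℕ) : Prop :=
  Stable M (ikMatching M ι κ)

/-- One-to-one matching (as a set of pairs). -/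
def IsMatching (μ : Finset (D × H)) : Prop :=
  (∀ d h h', (d, h) ∈ μ → (d, h') ∈ μ → h = h') ∧
    (∀ d d' h, (d, h) ∈ μ → (d', h) ∈ μ → d = d')

/-- Common preferences: all doctors rank the hospitals identically, all hospitals rank
the doctors identically, everyone is mutually acceptable (and preferences are strict). -/
def CommonPrefs (M : Market D H) : Prop :=
  M.Strict ∧ (∀ d d', M.rankDH d = M.rankDH d') ∧ (∀ h h', M.rankHD h = M.rankHD h') ∧
    ∀ d h, M.accD d h ∧ M.accH h d

/-- Number of hospitals matched under `μ`. -/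
def matchedHospitals (μ : Finset (D × H)) : ℕ :=
  (univ.filter fun h : H => ∃ d, (d, h) ∈ μ).card

/-- Number of blocking pairs of `μ`. -/
def blockingCount (M : Market D H) (μ : Finset (D × H)) : ℕ :=
  (univ.filter fun p : D × H => Blocks M μ p.1 p.2).card

end Model

/-- `(ι,κ)` is globally adequate: adequate at every (strict) preference profile. -/
def GloballyAdequate (D H : Type*) [Fintype D] [Fintype H] [DecidableEq D] [DecidableEq H]
    (ι : H → ℕ) (κ : D → ℕ) : Prop :=
  ∀ M : Market D H, M.Strict → Adequate M ι κ

variable {D H : Type*} [Fintype D] [Fintype H] [DecidableEq D] [DecidableEq H]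

set_option linter.unusedSectionVars false
set_option maxHeartbeats 1000000


section Pos
variable {α : Type*} [Fintype α] [DecidableEq α]

/-- position (0-indexed rank) of `a` under rank function `f`. -/
def rpos (f : α → ℕ) (a : α) : ℕ := ((univ : Finset α).filter fun b => f b < f a).card

variable {f : α → ℕ} (hf : Function.Injective f)

lemma rpos_le_of_le {a b : α} (h : f a ≤ f b) : rpos f a ≤ rpos f b := by
  apply card_le_card
  intro x hx
  simp only [rpos, mem_filter, mem_univ, true_and] at *
  omega

lemma rpos_lt_of_lt {a b : α} (h : f a < f b) : rpos f a < rpos f b := by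
  apply card_lt_card
  constructor
  · intro x hx
    simp only [mem_filter, mem_univ, true_and] at *
    omega
  · intro hsub
    have ha : a ∈ univ.filter fun x => f x < f b := by
      simp only [mem_filter, mem_univ, true_and]; exact h
    have := mem_filter.1 (hsub ha)
    omega

lemma rpos_lt_iff {a b : α} : f a < f b ↔ rpos f a < rpos f b := by
  constructor
  · exact rpos_lt_of_lt
  · intro h
    by_contra hc
    push_neg at hc
    have := rpos_le_of_le (f := f) hc
    omega

include hf in
lemma rpos_inj : Function.Injective (rpos f) := by
  intro a b h
  rcases lt_trichotomy (f a) (f b) with h1 | h1 | h1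
  · have := rpos_lt_of_lt (f := f) h1; omega
  · exact hf h1
  · have := rpos_lt_of_lt (f := f) h1; omega

lemma rpos_lt_card (a : α) : rpos f a < Fintype.card α := by
  rw [← Finset.card_univ]
  apply card_lt_card
  constructor
  · exact filter_subset _ _
  · intro hsub
    have := mem_filter.1 (hsub (mem_univ a))
    omega

include hf in
lemma rpos_surj {i : ℕ} (hi : i < Fintype.card α) : ∃ a, rpos f a = i := by
  have himg : (univ : Finset α).image (rpos f) = range (Fintype.card α) := by
    apply Finset.eq_of_subset_of_card_le
    · intro x hx
      simp only [mem_image] at hx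
      obtain ⟨a, _, rfl⟩ := hx
      simpa using rpos_lt_card a
    · rw [Finset.card_range, Finset.card_image_of_injective _ (rpos_inj hf), Finset.card_univ]
  have : i ∈ (univ : Finset α).image (rpos f) := by rw [himg]; simpa using hi
  simpa using this

include hf in
lemma count_rpos (p : ℕ → Prop) [DecidablePred p] :
    ((univ : Finset α).filter fun a => p (rpos f a)).card
      = ((range (Fintype.card α)).filter p).card := by
  apply Finset.card_bij (fun a _ => rpos f a)
  · intro a ha
    simp only [mem_filter, mem_univ, true_and] at ha ⊢
    exact ⟨by simpa using rpos_lt_card a, ha⟩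
  · intro a _ b _ h
    exact rpos_inj hf h
  · intro i hi
    simp only [mem_filter, mem_range] at hi
    obtain ⟨a, rfl⟩ := rpos_surj hf hi.1
    exact ⟨a, by simpa using hi.2, rfl⟩

include hf in
lemma count_rpos_Ico (a c : ℕ) :
    ((univ : Finset α).filter fun x => a ≤ rpos f x ∧ rpos f x < c).card
      = min c (Fintype.card α) - a := by
  rw [count_rpos hf (fun x => a ≤ x ∧ x < c)]
  have : ((range (Fintype.card α)).filter fun x => a ≤ x ∧ x < c)
      = Ico a (min c (Fintype.card α)) := by
    ext x; simp only [mem_filter, mem_range, mem_Ico]; omega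
  rw [this, Nat.card_Ico]

end Pos

section DivHelp

lemma ndiv_le_iff {l x b : ℕ} (hl : 0 < l) : b ≤ x / l ↔ b * l ≤ x :=
  Nat.le_div_iff_mul_le hl

lemma ndiv_eq_iff {l x b : ℕ} (hl : 0 < l) : x / l = b ↔ b * l ≤ x ∧ x < b * l + l := by
  constructor
  · rintro rfl
    exact ⟨Nat.div_mul_le_self x l, Nat.lt_div_mul_add hl⟩
  · rintro ⟨h1, h2⟩
    have hle : b ≤ x / l := (Nat.le_div_iff_mul_le hl).2 h1
    have hlt : x / l < b + 1 := by
      rw [Nat.div_lt_iff_lt_mul hl, add_mul, one_mul]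
      omega
    omega

lemma ndivmod_unique {l x b r : ℕ} (hx : x = b * l + r) (hr : r < l) :
    x / l = b ∧ x % l = r := by
  have hl : 0 < l := by omega
  have h1 : x / l = b := (ndiv_eq_iff hl).2 (by omega)
  refine ⟨h1, ?_⟩
  have h2 := Nat.div_add_mod x l
  rw [h1] at h2
  rw [mul_comm] at hx
  generalize l * b = B at hx h2
  omega

lemma ndiv_self_eq {l x : ℕ} (hl : 0 < l) :
    x = x / l * l + x % l ∧ x % l < l := by
  refine ⟨?_, Nat.mod_lt x hl⟩
  rw [mul_comm]
  exact (Nat.div_add_mod x l).symm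

end DivHelp

section TopN
variable {α : Type*} [Fintype α] [DecidableEq α]

lemma topN_interval {f : α → ℕ} (hf : Function.Injective f) (a c nn : ℕ) :
    topN f nn ((univ : Finset α).filter fun x => a ≤ rpos f x ∧ rpos f x < c)
      = (univ : Finset α).filter fun x => a ≤ rpos f x ∧ rpos f x < min (a + nn) c := by
  unfold topN
  rw [filter_filter]
  ext x
  simp only [mem_filter, mem_univ, true_and]
  have hcard : ((univ.filter fun y => a ≤ rpos f y ∧ rpos f y < c).filter
      fun y => f y < f x).card = min (min c (rpos f x)) (Fintype.card α) - a := by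
    rw [filter_filter]
    have heq : (univ.filter fun y => (a ≤ rpos f y ∧ rpos f y < c) ∧ f y < f x)
        = univ.filter fun y => a ≤ rpos f y ∧ rpos f y < min c (rpos f x) := by
      ext y
      simp only [mem_filter, mem_univ, true_and, rpos_lt_iff (f := f)]
      omega
    rw [heq, count_rpos_Ico hf]
  rw [hcard]
  have hx := rpos_lt_card (f := f) x
  omega

lemma topN_empty {f : α → ℕ} (nn : ℕ) : topN f nn (∅ : Finset α) = ∅ := by
  simp [topN]

lemma topN_zero {f : α → ℕ} (s : Finset α) : topN f 0 s = ∅ := by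
  simp [topN]

end TopN

section Interview
variable {D H : Type*} [Fintype D] [Fintype H] [DecidableEq D] [DecidableEq H]
variable {M : Market D H}

lemma accD_true (hM : CommonPrefs M) (d : D) (h : H) : M.accD d h := (hM.2.2.2 d h).1
lemma accH_true (hM : CommonPrefs M) (d : D) (h : H) : M.accH h d := (hM.2.2.2 d h).2

lemma hProps_eq (hM : CommonPrefs M) (d₀ : D) (h₀ : H) {l k : ℕ} (hl : 0 < l) (hk : 0 < k)
    (t : ℕ) (h : H) :
    hProps M (fun _ => l)
      (univ.filter fun p : H × D =>
        rpos (M.rankHD h₀) p.2 / l < t ∧ rpos (M.rankHD h₀) p.2 / l < rpos (M.rankDH d₀) p.1 / k) h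
    = univ.filter fun d =>
        rpos (M.rankHD h₀) d / l = min (rpos (M.rankDH d₀) h / k) t := by
  have injD : Function.Injective (M.rankHD h₀) := hM.1.2 h₀
  unfold hProps
  have hrw : M.rankHD h = M.rankHD h₀ := hM.2.2.1 h h₀
  rw [hrw]
  set c := min (rpos (M.rankDH d₀) h / k) t with hc
  have hbase : (univ.filter fun d => M.accH h d ∧ (h, d) ∉ (univ.filter fun p : H × D =>
        rpos (M.rankHD h₀) p.2 / l < t ∧ rpos (M.rankHD h₀) p.2 / l < rpos (M.rankDH d₀) p.1 / k))
      = univ.filter fun d =>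
        c * l ≤ rpos (M.rankHD h₀) d ∧ rpos (M.rankHD h₀) d < Fintype.card D := by
    ext d
    simp only [mem_filter, mem_univ, true_and]
    have hacc := accH_true hM d h
    have hcd := rpos_lt_card (f := M.rankHD h₀) d
    rw [← ndiv_le_iff hl]
    constructor
    · rintro ⟨-, hnot⟩
      refine ⟨?_, hcd⟩
      omega
    · rintro ⟨h1, -⟩
      exact ⟨hacc, by omega⟩
  rw [hbase, topN_interval injD]
  ext d
  simp only [mem_filter, mem_univ, true_and]
  have hcd := rpos_lt_card (f := M.rankHD h₀) d
  rw [ndiv_eq_iff hl]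
  generalize c * l = A
  omega

lemma dKeeps_eq (hM : CommonPrefs M) (d₀ : D) (h₀ : H) {l k : ℕ} (hl : 0 < l) (hk : 0 < k)
    (t : ℕ) (d : D) :
    dKeeps M (fun _ => l) (fun _ => k)
      (univ.filter fun p : H × D =>
        rpos (M.rankHD h₀) p.2 / l < t ∧ rpos (M.rankHD h₀) p.2 / l < rpos (M.rankDH d₀) p.1 / k) d
    = univ.filter fun h =>
        rpos (M.rankDH d₀) h / k = rpos (M.rankHD h₀) d / l ∧ rpos (M.rankHD h₀) d / l ≤ t := by
  have injH : Function.Injective (M.rankDH d₀) := hM.1.1 d₀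
  unfold dKeeps
  have hrw : (fun h => M.rankDH d h) = M.rankDH d₀ := by
    funext h; rw [hM.2.1 d d₀]
  rw [hrw]
  set b := rpos (M.rankHD h₀) d / l with hb
  rcases lt_trichotomy b t with hbt | hbt | hbt
  · -- b < t : proposers are exactly hospital block b, all kept
    have hbase : (univ.filter fun h => M.accD d h ∧ d ∈ hProps M (fun _ => l)
          (univ.filter fun p : H × D =>
            rpos (M.rankHD h₀) p.2 / l < t ∧ rpos (M.rankHD h₀) p.2 / l < rpos (M.rankDH d₀) p.1 / k) h)
        = univ.filter fun h =>
            b * k ≤ rpos (M.rankDH d₀) h ∧ rpos (M.rankDH d₀) h < b * k + k := by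
      ext h
      simp only [mem_filter, mem_univ, true_and, hProps_eq hM d₀ h₀ hl hk t h]
      have hacc := accD_true hM d h
      rw [← ndiv_eq_iff hk]
      constructor
      · rintro ⟨-, h1⟩; omega
      · intro h1; exact ⟨hacc, by omega⟩
    rw [hbase, topN_interval injH]
    ext h
    simp only [mem_filter, mem_univ, true_and]
    rw [ndiv_eq_iff hk]
    generalize b * k = A
    omega
  · -- b = t : proposers are all hospitals of block ≥ t; top k kept
    subst hbt
    have hbase : (univ.filter fun h => M.accD d h ∧ d ∈ hProps M (fun _ => l)
          (univ.filter fun p : H × D =>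
            rpos (M.rankHD h₀) p.2 / l < b ∧ rpos (M.rankHD h₀) p.2 / l < rpos (M.rankDH d₀) p.1 / k) h)
        = univ.filter fun h =>
            b * k ≤ rpos (M.rankDH d₀) h ∧ rpos (M.rankDH d₀) h < Fintype.card H := by
      ext h
      simp only [mem_filter, mem_univ, true_and, hProps_eq hM d₀ h₀ hl hk b h]
      have hacc := accD_true hM d h
      have hch := rpos_lt_card (f := M.rankDH d₀) h
      rw [← ndiv_le_iff hk]
      constructor
      · rintro ⟨-, h1⟩; exact ⟨by omega, hch⟩
      · intro h1; exact ⟨hacc, by omega⟩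
    rw [hbase, topN_interval injH]
    ext h
    simp only [mem_filter, mem_univ, true_and]
    have hch := rpos_lt_card (f := M.rankDH d₀) h
    rw [ndiv_eq_iff hk]
    generalize b * k = A
    omega
  · -- b > t : nobody proposes to d
    have hbase : (univ.filter fun h => M.accD d h ∧ d ∈ hProps M (fun _ => l)
          (univ.filter fun p : H × D =>
            rpos (M.rankHD h₀) p.2 / l < t ∧ rpos (M.rankHD h₀) p.2 / l < rpos (M.rankDH d₀) p.1 / k) h)
        = (∅ : Finset H) := by
      ext h
      simp only [mem_filter, mem_univ, true_and, hProps_eq hM d₀ h₀ hl hk t h,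
        Finset.notMem_empty, iff_false]
      rintro ⟨-, h1⟩
      omega
    rw [hbase, topN_empty]
    symm
    rw [Finset.eq_empty_iff_forall_notMem]
    intro h hh
    simp only [mem_filter, mem_univ, true_and] at hh
    omega

lemma iStep_eq (hM : CommonPrefs M) (d₀ : D) (h₀ : H) {l k : ℕ} (hl : 0 < l) (hk : 0 < k)
    (t : ℕ) :
    iStep M (fun _ => l) (fun _ => k)
      (univ.filter fun p : H × D =>
        rpos (M.rankHD h₀) p.2 / l < t ∧ rpos (M.rankHD h₀) p.2 / l < rpos (M.rankDH d₀) p.1 / k)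
    = univ.filter fun p : H × D =>
        rpos (M.rankHD h₀) p.2 / l < t + 1 ∧ rpos (M.rankHD h₀) p.2 / l < rpos (M.rankDH d₀) p.1 / k := by
  unfold iStep
  ext ⟨h, d⟩
  simp only [mem_union, mem_filter, mem_univ, true_and,
    hProps_eq hM d₀ h₀ hl hk t, dKeeps_eq hM d₀ h₀ hl hk t]
  omega

lemma iRej_iter (hM : CommonPrefs M) (d₀ : D) (h₀ : H) {l k : ℕ} (hl : 0 < l) (hk : 0 < k)
    (t : ℕ) :
    (iStep M (fun _ => l) (fun _ => k))^[t] ∅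
    = univ.filter fun p : H × D =>
        rpos (M.rankHD h₀) p.2 / l < t ∧ rpos (M.rankHD h₀) p.2 / l < rpos (M.rankDH d₀) p.1 / k := by
  induction t with
  | zero =>
    simp only [Function.iterate_zero, id_eq]
    symm
    rw [Finset.eq_empty_iff_forall_notMem]
    intro p hp
    simp only [mem_filter] at hp
    exact Nat.not_lt_zero _ hp.2.1
  | succ t ih =>
    rw [Function.iterate_succ_apply', ih, iStep_eq hM d₀ h₀ hl hk t]

lemma interviews_eq (hM : CommonPrefs M) (d₀ : D) (h₀ : H) {l k : ℕ} (hl : 0 < l) (hk : 0 < k) :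
    interviews M (fun _ => l) (fun _ => k)
    = univ.filter fun p : H × D =>
        rpos (M.rankDH d₀) p.1 / k = rpos (M.rankHD h₀) p.2 / l := by
  have hn : 0 < Fintype.card D := Fintype.card_pos_iff.2 ⟨d₀⟩
  have hm : 0 < Fintype.card H := Fintype.card_pos_iff.2 ⟨h₀⟩
  unfold interviews iRej
  rw [iRej_iter hM d₀ h₀ hl hk]
  ext ⟨h, d⟩
  simp only [mem_filter, mem_univ, true_and,
    hProps_eq hM d₀ h₀ hl hk, dKeeps_eq hM d₀ h₀ hl hk]
  have h1 : rpos (M.rankHD h₀) d / l < Fintype.card D * Fintype.card H :=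
    lt_of_le_of_lt (Nat.div_le_self _ _)
      (lt_of_lt_of_le (rpos_lt_card d) (Nat.le_mul_of_pos_right _ hm))
  have h2 : rpos (M.rankDH d₀) h / k < Fintype.card D * Fintype.card H :=
    lt_of_le_of_lt (Nat.div_le_self _ _)
      (lt_of_lt_of_le (rpos_lt_card h) (Nat.le_mul_of_pos_left _ hn))
  omega

end Interview

section ArithIff

lemma arithA1 {k b c x : ℕ} (hk : 0 < k) :
    (x / k = b ∧ ¬(x / k = b ∧ x % k < c)) ↔ (b * k + c ≤ x ∧ x < b * k + k) := by
  obtain ⟨h1, h2⟩ := ndiv_self_eq (x := x) hk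
  constructor
  · rintro ⟨hq, hnot⟩
    have hr : c ≤ x % k := by
      by_contra hc
      exact hnot ⟨hq, by omega⟩
    rw [hq] at h1
    generalize b * k = B at h1 ⊢
    omega
  · rintro ⟨ha1, ha2⟩
    have hdm := ndivmod_unique (l := k) (x := x) (b := b) (r := x - b * k)
      (by generalize b * k = B at ha1 ha2 ⊢; omega)
      (by generalize b * k = B at ha1 ha2 ⊢; omega)
    refine ⟨hdm.1, ?_⟩
    rintro ⟨-, hlt⟩
    rw [hdm.2] at hlt
    generalize b * k = B at ha1 ha2 hlt
    omega

lemma arithA3 {l k t i j : ℕ} (hl : 0 < l) (hk : 0 < k) :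
    (i = j / l * k + min (j % l) t ∧ min (j % l) t < k) ↔
      (j / l = i / k ∧ min (j % l) t = i % k) := by
  constructor
  · rintro ⟨hi, hc⟩
    have hdm := ndivmod_unique (l := k) (x := i) (b := j / l) (r := min (j % l) t) hi hc
    exact ⟨hdm.1.symm, hdm.2.symm⟩
  · rintro ⟨hq, hr⟩
    obtain ⟨h1, h2⟩ := ndiv_self_eq (x := i) hk
    rw [← hq] at h1
    rw [← hr] at h1 h2
    exact ⟨h1, h2⟩

lemma arithA4 {l b r t j : ℕ} (hl : 0 < l) :
    (j = b * l + r ∧ r ≤ t ∧ r < l) ↔ (j / l = b ∧ j % l = r ∧ r ≤ t) := by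
  constructor
  · rintro ⟨hj, ht, hr⟩
    have hdm := ndivmod_unique (l := l) (x := j) (b := b) (r := r) hj hr
    exact ⟨hdm.1, hdm.2, ht⟩
  · rintro ⟨hq, hr, ht⟩
    obtain ⟨h1, h2⟩ := ndiv_self_eq (x := j) hl
    rw [hq] at h1
    rw [hr] at h1 h2
    exact ⟨h1, ht, h2⟩

lemma arithA5 {l b r j : ℕ} (hl : 0 < l) :
    (j / l = b ∧ j % l = r) ↔ (b * l + r ≤ j ∧ j < min (b * l + r + 1) (b * l + l)) := by
  constructor
  · rintro ⟨hq, hr⟩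
    obtain ⟨h1, h2⟩ := ndiv_self_eq (x := j) hl
    rw [hq] at h1
    rw [hr] at h1 h2
    generalize b * l = B at h1 h2 ⊢
    omega
  · rintro ⟨ha1, ha2⟩
    have hrl : r < l := by generalize b * l = B at ha1 ha2; omega
    have hj : j = b * l + r := by generalize b * l = B at ha1 ha2 ⊢; omega
    exact ndivmod_unique hj hrl

end ArithIff

section MatchStep
variable {D H : Type*} [Fintype D] [Fintype H] [DecidableEq D] [DecidableEq H]
variable {M : Market D H}

lemma dProps_eq2 (hM : CommonPrefs M) (d₀ : D) (h₀ : H) {l k : ℕ} (hl : 0 < l) (hk : 0 < k)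
    (t : ℕ) (d : D) :
    dProps M (univ.filter fun p : H × D => rpos (M.rankDH d₀) p.1 / k = rpos (M.rankHD h₀) p.2 / l)
      (univ.filter fun p : D × H =>
        rpos (M.rankDH d₀) p.2 / k = rpos (M.rankHD h₀) p.1 / l ∧
          rpos (M.rankDH d₀) p.2 % k < min (rpos (M.rankHD h₀) p.1 % l) t) d
    = univ.filter fun h =>
        rpos (M.rankDH d₀) h = rpos (M.rankHD h₀) d / l * k + min (rpos (M.rankHD h₀) d % l) t ∧
          min (rpos (M.rankHD h₀) d % l) t < k := by
  have injH : Function.Injective (M.rankDH d₀) := hM.1.1 d₀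
  unfold dProps
  have hrw : M.rankDH d = M.rankDH d₀ := hM.2.1 d d₀
  rw [hrw]
  set b := rpos (M.rankHD h₀) d / l with hb
  set c := min (rpos (M.rankHD h₀) d % l) t with hc
  have hbase : (univ.filter fun h =>
        (h, d) ∈ (univ.filter fun p : H × D =>
          rpos (M.rankDH d₀) p.1 / k = rpos (M.rankHD h₀) p.2 / l) ∧
        (d, h) ∉ (univ.filter fun p : D × H =>
          rpos (M.rankDH d₀) p.2 / k = rpos (M.rankHD h₀) p.1 / l ∧
            rpos (M.rankDH d₀) p.2 % k < min (rpos (M.rankHD h₀) p.1 % l) t))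
      = univ.filter fun h =>
          b * k + c ≤ rpos (M.rankDH d₀) h ∧ rpos (M.rankDH d₀) h < b * k + k := by
    ext h
    simp only [mem_filter, mem_univ, true_and, not_and]
    rw [← arithA1 (b := b) (c := c) (x := rpos (M.rankDH d₀) h) hk]
    constructor
    · rintro ⟨h1, h2⟩
      exact ⟨h1, fun hh => h2 hh.1 hh.2⟩
    · rintro ⟨h1, h2⟩
      exact ⟨h1, fun ha hb' => h2 ⟨ha, hb'⟩⟩
  rw [hbase, topN_interval injH]
  ext h
  simp only [mem_filter, mem_univ, true_and]
  generalize b * k = B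
  omega

lemma hKeeps_eq2 (hM : CommonPrefs M) (d₀ : D) (h₀ : H) {l k : ℕ} (hl : 0 < l) (hk : 0 < k)
    (t : ℕ) (h : H) :
    hKeeps M (univ.filter fun p : H × D => rpos (M.rankDH d₀) p.1 / k = rpos (M.rankHD h₀) p.2 / l)
      (univ.filter fun p : D × H =>
        rpos (M.rankDH d₀) p.2 / k = rpos (M.rankHD h₀) p.1 / l ∧
          rpos (M.rankDH d₀) p.2 % k < min (rpos (M.rankHD h₀) p.1 % l) t) h
    = univ.filter fun d =>
        rpos (M.rankHD h₀) d = rpos (M.rankDH d₀) h / k * l + rpos (M.rankDH d₀) h % k ∧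
          rpos (M.rankDH d₀) h % k ≤ t ∧ rpos (M.rankDH d₀) h % k < l := by
  have injD : Function.Injective (M.rankHD h₀) := hM.1.2 h₀
  unfold hKeeps
  have hrw : M.rankHD h = M.rankHD h₀ := hM.2.2.1 h h₀
  rw [hrw]
  set i := rpos (M.rankDH d₀) h with hi
  set b' := i / k with hb'
  set r' := i % k with hr'
  have hbase0 : ∀ d : D, (h ∈ dProps M
        (univ.filter fun p : H × D => rpos (M.rankDH d₀) p.1 / k = rpos (M.rankHD h₀) p.2 / l)
        (univ.filter fun p : D × H =>
          rpos (M.rankDH d₀) p.2 / k = rpos (M.rankHD h₀) p.1 / l ∧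
            rpos (M.rankDH d₀) p.2 % k < min (rpos (M.rankHD h₀) p.1 % l) t) d)
      ↔ (rpos (M.rankHD h₀) d / l = b' ∧ min (rpos (M.rankHD h₀) d % l) t = r') := by
    intro d
    rw [dProps_eq2 hM d₀ h₀ hl hk t d]
    simp only [mem_filter, mem_univ, true_and]
    exact arithA3 hl hk
  rcases lt_trichotomy r' t with hrt | hrt | hrt
  · -- r' < t
    have hbase : (univ.filter fun d => h ∈ dProps M
          (univ.filter fun p : H × D => rpos (M.rankDH d₀) p.1 / k = rpos (M.rankHD h₀) p.2 / l)
          (univ.filter fun p : D × H =>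
            rpos (M.rankDH d₀) p.2 / k = rpos (M.rankHD h₀) p.1 / l ∧
              rpos (M.rankDH d₀) p.2 % k < min (rpos (M.rankHD h₀) p.1 % l) t) d)
        = univ.filter fun d => b' * l + r' ≤ rpos (M.rankHD h₀) d ∧
            rpos (M.rankHD h₀) d < min (b' * l + r' + 1) (b' * l + l) := by
      ext d
      simp only [mem_filter, mem_univ, true_and, hbase0 d]
      rw [← arithA5 (b := b') (r := r') (j := rpos (M.rankHD h₀) d) hl]
      constructor
      · rintro ⟨h1, h2⟩; exact ⟨h1, by omega⟩
      · rintro ⟨h1, h2⟩; exact ⟨h1, by omega⟩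
    rw [hbase, topN_interval injD]
    ext d
    simp only [mem_filter, mem_univ, true_and]
    generalize b' * l = B
    omega
  · -- r' = t
    have hbase : (univ.filter fun d => h ∈ dProps M
          (univ.filter fun p : H × D => rpos (M.rankDH d₀) p.1 / k = rpos (M.rankHD h₀) p.2 / l)
          (univ.filter fun p : D × H =>
            rpos (M.rankDH d₀) p.2 / k = rpos (M.rankHD h₀) p.1 / l ∧
              rpos (M.rankDH d₀) p.2 % k < min (rpos (M.rankHD h₀) p.1 % l) t) d)
        = univ.filter fun d => b' * l + r' ≤ rpos (M.rankHD h₀) d ∧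
            rpos (M.rankHD h₀) d < b' * l + l := by
      ext d
      simp only [mem_filter, mem_univ, true_and, hbase0 d]
      obtain ⟨hd1, hd2⟩ := ndiv_self_eq (x := rpos (M.rankHD h₀) d) hl
      constructor
      · rintro ⟨h1, h2⟩
        rw [h1] at hd1
        have hge : r' ≤ rpos (M.rankHD h₀) d % l := by omega
        generalize b' * l = B at hd1 ⊢
        omega
      · rintro ⟨h1, h2⟩
        have hrl : rpos (M.rankHD h₀) d % l ≥ r' ∧ rpos (M.rankHD h₀) d / l = b' := by
          have hdm := ndivmod_unique (l := l) (x := rpos (M.rankHD h₀) d) (b := b')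
            (r := rpos (M.rankHD h₀) d - b' * l)
            (by generalize b' * l = B at h1 h2 ⊢; omega)
            (by generalize b' * l = B at h1 h2 ⊢; omega)
          rw [hdm.1, hdm.2]
          constructor
          · generalize b' * l = B at h1 h2 ⊢; omega
          · rfl
        exact ⟨hrl.2, by omega⟩
    rw [hbase, topN_interval injD]
    ext d
    simp only [mem_filter, mem_univ, true_and]
    generalize b' * l = B
    omega
  · -- r' > t : no proposers
    have hbase : (univ.filter fun d => h ∈ dProps M
          (univ.filter fun p : H × D => rpos (M.rankDH d₀) p.1 / k = rpos (M.rankHD h₀) p.2 / l)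
          (univ.filter fun p : D × H =>
            rpos (M.rankDH d₀) p.2 / k = rpos (M.rankHD h₀) p.1 / l ∧
              rpos (M.rankDH d₀) p.2 % k < min (rpos (M.rankHD h₀) p.1 % l) t) d)
        = (∅ : Finset D) := by
      ext d
      simp only [mem_filter, mem_univ, true_and, hbase0 d, Finset.notMem_empty, iff_false]
      rintro ⟨-, h2⟩
      omega
    rw [hbase, topN_empty]
    symm
    rw [Finset.eq_empty_iff_forall_notMem]
    intro d hd
    simp only [mem_filter, mem_univ, true_and] at hd
    omega

end MatchStep

section MatchStep2
variable {D H : Type*} [Fintype D] [Fintype H] [DecidableEq D] [DecidableEq H]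
variable {M : Market D H}

lemma mStep_eq2 (hM : CommonPrefs M) (d₀ : D) (h₀ : H) {l k : ℕ} (hl : 0 < l) (hk : 0 < k)
    (t : ℕ) :
    mStep M (univ.filter fun p : H × D => rpos (M.rankDH d₀) p.1 / k = rpos (M.rankHD h₀) p.2 / l)
      (univ.filter fun p : D × H =>
        rpos (M.rankDH d₀) p.2 / k = rpos (M.rankHD h₀) p.1 / l ∧
          rpos (M.rankDH d₀) p.2 % k < min (rpos (M.rankHD h₀) p.1 % l) t)
    = univ.filter fun p : D × H =>
        rpos (M.rankDH d₀) p.2 / k = rpos (M.rankHD h₀) p.1 / l ∧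
          rpos (M.rankDH d₀) p.2 % k < min (rpos (M.rankHD h₀) p.1 % l) (t + 1) := by
  unfold mStep
  ext ⟨d, h⟩
  simp only [mem_union, mem_filter, mem_univ, true_and,
    dProps_eq2 hM d₀ h₀ hl hk t, hKeeps_eq2 hM d₀ h₀ hl hk t]
  rw [arithA3 hl hk, arithA4 hl]
  have h1 := Nat.mod_lt (rpos (M.rankDH d₀) h) hk
  have h2 := Nat.mod_lt (rpos (M.rankHD h₀) d) hl
  omega

lemma mRej_iter2 (hM : CommonPrefs M) (d₀ : D) (h₀ : H) {l k : ℕ} (hl : 0 < l) (hk : 0 < k)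
    (t : ℕ) :
    (mStep M (univ.filter fun p : H × D =>
        rpos (M.rankDH d₀) p.1 / k = rpos (M.rankHD h₀) p.2 / l))^[t] ∅
    = univ.filter fun p : D × H =>
        rpos (M.rankDH d₀) p.2 / k = rpos (M.rankHD h₀) p.1 / l ∧
          rpos (M.rankDH d₀) p.2 % k < min (rpos (M.rankHD h₀) p.1 % l) t := by
  induction t with
  | zero =>
    simp only [Function.iterate_zero, id_eq]
    symm
    rw [Finset.eq_empty_iff_forall_notMem]
    intro p hp
    simp only [mem_filter] at hp
    omega
  | succ t ih =>
    rw [Function.iterate_succ_apply', ih, mStep_eq2 hM d₀ h₀ hl hk t]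

lemma finalMatch_eq2 (hM : CommonPrefs M) (d₀ : D) (h₀ : H) {l k : ℕ} (hl : 0 < l) (hk : 0 < k) :
    finalMatch M (univ.filter fun p : H × D =>
        rpos (M.rankDH d₀) p.1 / k = rpos (M.rankHD h₀) p.2 / l)
    = univ.filter fun p : D × H =>
        rpos (M.rankHD h₀) p.1 / l = rpos (M.rankDH d₀) p.2 / k ∧
          rpos (M.rankHD h₀) p.1 % l = rpos (M.rankDH d₀) p.2 % k := by
  have hn : 0 < Fintype.card D := Fintype.card_pos_iff.2 ⟨d₀⟩
  have hm : 0 < Fintype.card H := Fintype.card_pos_iff.2 ⟨h₀⟩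
  unfold finalMatch mRej
  rw [mRej_iter2 hM d₀ h₀ hl hk]
  ext ⟨d, h⟩
  simp only [mem_filter, mem_univ, true_and,
    dProps_eq2 hM d₀ h₀ hl hk, hKeeps_eq2 hM d₀ h₀ hl hk]
  rw [arithA3 hl hk, arithA4 hl]
  have h1 := Nat.mod_lt (rpos (M.rankDH d₀) h) hk
  have h2 := Nat.mod_lt (rpos (M.rankHD h₀) d) hl
  have h3 : rpos (M.rankHD h₀) d % l ≤ rpos (M.rankHD h₀) d := Nat.mod_le _ _
  have h4 : rpos (M.rankHD h₀) d < Fintype.card D * Fintype.card H :=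
    lt_of_lt_of_le (rpos_lt_card d) (Nat.le_mul_of_pos_right _ hm)
  have h5 : rpos (M.rankDH d₀) h % k ≤ rpos (M.rankDH d₀) h := Nat.mod_le _ _
  have h6 : rpos (M.rankDH d₀) h < Fintype.card D * Fintype.card H :=
    lt_of_lt_of_le (rpos_lt_card h) (Nat.le_mul_of_pos_left _ hn)
  omega

lemma ikMatching_eq (hM : CommonPrefs M) (d₀ : D) (h₀ : H) {l k : ℕ} (hl : 0 < l) (hk : 0 < k) :
    ikMatching M (fun _ => l) (fun _ => k)
    = univ.filter fun p : D × H =>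
        rpos (M.rankHD h₀) p.1 / l = rpos (M.rankDH d₀) p.2 / k ∧
          rpos (M.rankHD h₀) p.1 % l = rpos (M.rankDH d₀) p.2 % k := by
  unfold ikMatching
  rw [interviews_eq hM d₀ h₀ hl hk, finalMatch_eq2 hM d₀ h₀ hl hk]

end MatchStep2

section ArithCore

/-- matched-pair predicate on rank indices -/
abbrev MatchP (l k j i : ℕ) : Prop := j / l = i / k ∧ j % l = i % k

/-- blocking-pair predicate on rank indices -/
abbrev BlkP (n m l k j i : ℕ) : Prop :=
  ¬ MatchP l k j i ∧ (∀ i' < m, MatchP l k j i' → i < i') ∧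
    (∀ j' < n, MatchP l k j' i → j < j')

lemma matchP_swap {l k j i : ℕ} : MatchP l k j i ↔ MatchP k l i j :=
  ⟨fun ⟨a, b⟩ => ⟨a.symm, b.symm⟩, fun ⟨a, b⟩ => ⟨a.symm, b.symm⟩⟩

lemma blkP_swap {n m l k j i : ℕ} : BlkP n m l k j i ↔ BlkP m n k l i j := by
  constructor
  · rintro ⟨h1, h2, h3⟩
    exact ⟨fun hc => h1 (matchP_swap.2 hc),
      fun j' hj' hmp => h3 j' hj' (matchP_swap.2 hmp),
      fun i' hi' hmp => h2 i' hi' (matchP_swap.2 hmp)⟩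
  · rintro ⟨h1, h2, h3⟩
    exact ⟨fun hc => h1 (matchP_swap.1 hc),
      fun i' hi' hmp => h3 i' hi' (matchP_swap.1 hmp),
      fun j' hj' hmp => h2 j' hj' (matchP_swap.1 hmp)⟩

/-- doctor below the partner of hospital `i` has its own partner below `i` -/
lemma partner_lt {l k j i : ℕ} (hl : 0 < l) (hlk : l ≤ k)
    (hb : j < i / k * l + min (i % k) l) : j / l * k + j % l < i := by
  have hk : 0 < k := lt_of_lt_of_le hl hlk
  obtain ⟨hi1, hi2⟩ := ndiv_self_eq (x := i) hk
  obtain ⟨hj1, hj2⟩ := ndiv_self_eq (x := j) hl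
  rcases Nat.lt_trichotomy (j / l) (i / k) with hc | hc | hc
  · have e3 : j % l < k := lt_of_lt_of_le hj2 hlk
    have e4 : (j / l + 1) * k = j / l * k + k := by ring
    have e2 : (j / l + 1) * k ≤ i / k * k := Nat.mul_le_mul_right _ (by omega)
    generalize j / l * k = A at e4 ⊢
    generalize (j / l + 1) * k = B at e4 e2
    generalize i / k * k = C at e2 hi1
    omega
  · rw [hc] at hj1 ⊢
    generalize i / k * l = P at hj1 hb
    generalize i / k * k = Q at hi1 ⊢
    omega
  · exfalso
    have e3 : (i / k + 1) * l ≤ j / l * l := Nat.mul_le_mul_right _ (by omega)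
    have e4 : (i / k + 1) * l = i / k * l + l := by ring
    generalize i / k * l = P at e4 hb
    generalize (i / k + 1) * l = B at e3 e4
    generalize j / l * l = A at e3 hj1
    omega

lemma blkP_iff {n m l k j i : ℕ} (hl : 0 < l) (hlk : l ≤ k) (hj : j < n) (hi : i < m) :
    BlkP n m l k j i ↔
      (¬ (i % k < l ∧ i / k * l + i % k < n)) ∧ min (i / k * l + min (i % k + 1) l) n ≤ j := by
  have hk : 0 < k := lt_of_lt_of_le hl hlk
  obtain ⟨hi1, hi2⟩ := ndiv_self_eq (x := i) hk
  obtain ⟨hj1, hj2⟩ := ndiv_self_eq (x := j) hl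
  constructor
  · rintro ⟨hnm, hAi, hAj⟩
    have hnmH : ¬ (i % k < l ∧ i / k * l + i % k < n) := by
      rintro ⟨hrl, hpn⟩
      have hj₀ : MatchP l k (i / k * l + i % k) i := by
        obtain ⟨e1, e2⟩ := ndivmod_unique (l := l) (x := i / k * l + i % k)
          (b := i / k) (r := i % k) rfl hrl
        exact ⟨by rw [e1], by rw [e2]⟩
      have hjlt : j < i / k * l + i % k := hAj _ hpn hj₀
      have hplt : j / l * k + j % l < i := partner_lt hl hlk
        (by generalize i / k * l = P at hjlt ⊢; omega)
      have hpm : MatchP l k j (j / l * k + j % l) := by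
        have hlk' : j % l < k := lt_of_lt_of_le hj2 hlk
        obtain ⟨e1, e2⟩ := ndivmod_unique (l := k) (x := j / l * k + j % l)
          (b := j / l) (r := j % l) rfl hlk'
        exact ⟨e1.symm, e2.symm⟩
      have := hAi _ (lt_trans hplt hi) hpm
      omega
    refine ⟨hnmH, ?_⟩
    by_contra hcon
    push_neg at hcon
    have hkey : j < i / k * l + min (i % k) l := by
      rcases Nat.lt_or_ge (i % k) l with hrl | hrl
      · have hge : n ≤ i / k * l + i % k := by
          by_contra hx
          push_neg at hx
          exact hnmH ⟨hrl, hx⟩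
        generalize i / k * l = P at hge ⊢
        omega
      · generalize i / k * l = P at hcon ⊢
        omega
    have hplt : j / l * k + j % l < i := partner_lt hl hlk hkey
    have hpm : MatchP l k j (j / l * k + j % l) := by
      have hlk' : j % l < k := lt_of_lt_of_le hj2 hlk
      obtain ⟨e1, e2⟩ := ndivmod_unique (l := k) (x := j / l * k + j % l)
        (b := j / l) (r := j % l) rfl hlk'
      exact ⟨e1.symm, e2.symm⟩
    have := hAi _ (lt_trans hplt hi) hpm
    omega
  · rintro ⟨hnmH, hvj⟩
    refine ⟨?_, ?_, ?_⟩
    · rintro ⟨e1, e2⟩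
      apply hnmH
      have hjeq : j = i / k * l + i % k := by rw [← e1, ← e2]; exact hj1
      constructor
      · rw [← e2]; exact hj2
      · omega
    · rintro i' hi'm ⟨e1, e2⟩
      have hieq : i' = j / l * k + j % l := by
        obtain ⟨a1, a2⟩ := ndiv_self_eq (x := i') hk
        rw [← e1, ← e2] at a1
        exact a1
      by_contra hle
      push_neg at hle
      rcases Nat.lt_trichotomy (j / l) (i / k) with hc | hc | hc
      · have e3 : (j / l + 1) * l ≤ i / k * l := Nat.mul_le_mul_right _ (by omega)
        have e4 : (j / l + 1) * l = j / l * l + l := by ring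
        generalize j / l * l = A at hj1 e4
        generalize (j / l + 1) * l = B at e3 e4
        generalize i / k * l = C at e3 hvj
        omega
      · rw [hc] at hieq hj1
        have hle2 : j % l ≤ i % k := by
          generalize i / k * k = Q at hieq hi1
          omega
        generalize i / k * l = P at hj1 hvj
        omega
      · have e3 : (i / k + 1) * k ≤ j / l * k := Nat.mul_le_mul_right _ (by omega)
        have e4 : (i / k + 1) * k = i / k * k + k := by ring
        generalize i / k * k = Q at hi1 e4
        generalize (i / k + 1) * k = W at e3 e4
        generalize j / l * k = V at hieq e3
        omega
    · rintro j' hj'n ⟨e1, e2⟩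
      exfalso
      apply hnmH
      obtain ⟨a1, a2⟩ := ndiv_self_eq (x := j') hl
      constructor
      · rw [← e2]; exact a2
      · rw [← e1, ← e2]
        generalize j' / l * l = A at a1 ⊢
        omega

end ArithCore

section ArithCount

/-- number of matched pairs -/
def cntP (n m l k : ℕ) : ℕ :=
  ((Finset.range n ×ˢ Finset.range m).filter fun q => MatchP l k q.1 q.2).card

/-- number of blocking pairs -/
def blkPc (n m l k : ℕ) : ℕ :=
  ((Finset.range n ×ˢ Finset.range m).filter fun q => BlkP n m l k q.1 q.2).card

lemma cntP_swap (n m l k : ℕ) : cntP n m l k = cntP m n k l := by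
  unfold cntP
  refine Finset.card_nbij' (fun q => (q.2, q.1)) (fun q => (q.2, q.1)) ?_ ?_ ?_ ?_
  · rintro ⟨a, b⟩ hq
    simp only [Finset.mem_coe, Finset.mem_filter, Finset.mem_product, Finset.mem_range] at hq ⊢
    exact ⟨⟨hq.1.2, hq.1.1⟩, matchP_swap.1 hq.2⟩
  · rintro ⟨a, b⟩ hq
    simp only [Finset.mem_coe, Finset.mem_filter, Finset.mem_product, Finset.mem_range] at hq ⊢
    exact ⟨⟨hq.1.2, hq.1.1⟩, matchP_swap.2 hq.2⟩
  · rintro ⟨a, b⟩ _; rfl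
  · rintro ⟨a, b⟩ _; rfl

lemma blkPc_swap (n m l k : ℕ) : blkPc n m l k = blkPc m n k l := by
  unfold blkPc
  refine Finset.card_nbij' (fun q => (q.2, q.1)) (fun q => (q.2, q.1)) ?_ ?_ ?_ ?_
  · rintro ⟨a, b⟩ hq
    simp only [Finset.mem_coe, Finset.mem_filter, Finset.mem_product, Finset.mem_range] at hq ⊢
    exact ⟨⟨hq.1.2, hq.1.1⟩, blkP_swap.1 hq.2⟩
  · rintro ⟨a, b⟩ hq
    simp only [Finset.mem_coe, Finset.mem_filter, Finset.mem_product, Finset.mem_range] at hq ⊢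
    exact ⟨⟨hq.1.2, hq.1.1⟩, blkP_swap.2 hq.2⟩
  · rintro ⟨a, b⟩ _; rfl
  · rintro ⟨a, b⟩ _; rfl

lemma card_filter_product {n m : ℕ} (P : ℕ × ℕ → Prop) [DecidablePred P] :
    ((Finset.range n ×ˢ Finset.range m).filter P).card
      = ∑ i ∈ Finset.range m, ((Finset.range n).filter fun j => P (j, i)).card := by
  rw [Finset.card_filter, Finset.sum_product, Finset.sum_comm]
  apply Finset.sum_congr rfl
  intro i _
  rw [Finset.card_filter]

lemma matchP_fiber {n l k : ℕ} (hl : 0 < l) (hk : 0 < k) (i : ℕ) :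
    ((Finset.range n).filter fun j => MatchP l k j i)
      = if i % k < l ∧ i / k * l + i % k < n then {i / k * l + i % k} else ∅ := by
  split_ifs with hcond
  · ext j
    simp only [Finset.mem_filter, Finset.mem_range, Finset.mem_singleton]
    constructor
    · rintro ⟨hjn, e1, e2⟩
      obtain ⟨a1, a2⟩ := ndiv_self_eq (x := j) hl
      rw [e1, e2] at a1
      exact a1
    · intro hj
      obtain ⟨e1, e2⟩ := ndivmod_unique (l := l) (x := i / k * l + i % k)
        (b := i / k) (r := i % k) rfl hcond.1
      rw [hj]
      exact ⟨hcond.2, e1, e2⟩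
  · ext j
    simp only [Finset.mem_filter, Finset.mem_range, Finset.notMem_empty, iff_false, not_and]
    intro hjn e1 e2
    apply hcond
    obtain ⟨a1, a2⟩ := ndiv_self_eq (x := j) hl
    rw [e1] at a1
    rw [e2] at a1 a2
    refine ⟨a2, ?_⟩
    generalize i / k * l = X at a1 ⊢
    omega

lemma cntP_eq_hosp {n m l k : ℕ} (hl : 0 < l) (hk : 0 < k) :
    cntP n m l k = ((Finset.range m).filter fun i => i % k < l ∧ i / k * l + i % k < n).card := by
  unfold cntP
  rw [card_filter_product]
  rw [Finset.card_filter]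
  apply Finset.sum_congr rfl
  intro i _
  beta_reduce
  rw [matchP_fiber hl hk]
  split_ifs <;> simp

lemma cntP_eq_doc {n m l k : ℕ} (hl : 0 < l) (hk : 0 < k) :
    cntP n m l k = ((Finset.range n).filter fun j => j % l < k ∧ j / l * k + j % l < m).card := by
  rw [cntP_swap, cntP_eq_hosp hk hl]

lemma blkPc_eq_sum {n m l k : ℕ} (hl : 0 < l) (hlk : l ≤ k) :
    blkPc n m l k = ∑ i ∈ Finset.range m,
      (if i % k < l ∧ i / k * l + i % k < n then 0
        else n - min (i / k * l + min (i % k + 1) l) n) := by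
  unfold blkPc
  rw [card_filter_product]
  apply Finset.sum_congr rfl
  intro i hi
  beta_reduce
  rw [Finset.mem_range] at hi
  have hfib : ((Finset.range n).filter fun j => BlkP n m l k j i)
      = if i % k < l ∧ i / k * l + i % k < n then ∅
        else Finset.Ico (min (i / k * l + min (i % k + 1) l) n) n := by
    split_ifs with hcond
    · rw [Finset.eq_empty_iff_forall_notMem]
      intro j hjmem
      simp only [Finset.mem_filter, Finset.mem_range] at hjmem
      exact ((blkP_iff hl hlk hjmem.1 hi).1 hjmem.2).1 hcond
    · ext j
      simp only [Finset.mem_filter, Finset.mem_range, Finset.mem_Ico]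
      constructor
      · rintro ⟨hjn, hb⟩
        exact ⟨((blkP_iff hl hlk hjn hi).1 hb).2, hjn⟩
      · rintro ⟨hv, hjn⟩
        exact ⟨hjn, (blkP_iff hl hlk hjn hi).2 ⟨hcond, hv⟩⟩
  rw [hfib]
  split_ifs
  · simp
  · rw [Nat.card_Ico]

/-- sum over matched hospitals of (n - (partner+1)) -/
def dSum (n m l k : ℕ) : ℕ :=
  ∑ i ∈ Finset.range m,
    (if i % k < l ∧ i / k * l + i % k < n then n - (i / k * l + i % k + 1) else 0)

lemma blkPc_plus {n m l k : ℕ} (hl : 0 < l) (hlk : l ≤ k) :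
    blkPc n m l k + dSum n m l k
      = ∑ i ∈ Finset.range m, (n - min (i / k * l + min (i % k + 1) l) n) := by
  rw [blkPc_eq_sum hl hlk, dSum, ← Finset.sum_add_distrib]
  apply Finset.sum_congr rfl
  intro i _
  split_ifs with hc
  · obtain ⟨hc1, hc2⟩ := hc
    generalize i / k * l = P at hc2 ⊢
    omega
  · omega

lemma dSum_eq_doc {n m l k : ℕ} (hl : 0 < l) (hk : 0 < k) :
    dSum n m l k = ∑ j ∈ Finset.range n,
      (if j % l < k ∧ j / l * k + j % l < m then n - (j + 1) else 0) := by
  unfold dSum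
  rw [← Finset.sum_filter, ← Finset.sum_filter]
  apply Finset.sum_bij' (i := fun (i : ℕ) (_ : i ∈ (Finset.range m).filter
      fun i => i % k < l ∧ i / k * l + i % k < n) => i / k * l + i % k)
    (j := fun (j : ℕ) (_ : j ∈ (Finset.range n).filter
      fun j => j % l < k ∧ j / l * k + j % l < m) => j / l * k + j % l)
  · intro i hi
    simp only [Finset.mem_filter, Finset.mem_range] at hi ⊢
    obtain ⟨him, hrl, hpn⟩ := hi
    obtain ⟨e1, e2⟩ := ndivmod_unique (l := l) (x := i / k * l + i % k)
      (b := i / k) (r := i % k) rfl hrl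
    obtain ⟨a1, a2⟩ := ndiv_self_eq (x := i) hk
    refine ⟨hpn, ?_, ?_⟩
    · rw [e2]; exact Nat.mod_lt _ hk
    · rw [e1, e2]
      generalize i / k * k = Q at a1
      omega
  · intro j hj
    simp only [Finset.mem_filter, Finset.mem_range] at hj ⊢
    obtain ⟨hjn, hrk, hpm⟩ := hj
    obtain ⟨e1, e2⟩ := ndivmod_unique (l := k) (x := j / l * k + j % l)
      (b := j / l) (r := j % l) rfl hrk
    obtain ⟨a1, a2⟩ := ndiv_self_eq (x := j) hl
    refine ⟨hpm, ?_, ?_⟩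
    · rw [e2]; exact Nat.mod_lt _ hl
    · rw [e1, e2]
      generalize j / l * l = A at a1
      omega
  · intro i hi
    simp only [Finset.mem_filter, Finset.mem_range] at hi
    obtain ⟨him, hrl, hpn⟩ := hi
    obtain ⟨e1, e2⟩ := ndivmod_unique (l := l) (x := i / k * l + i % k)
      (b := i / k) (r := i % k) rfl hrl
    beta_reduce
    rw [e1, e2]
    obtain ⟨a1, a2⟩ := ndiv_self_eq (x := i) hk
    generalize i / k * k = Q at a1 ⊢
    omega
  · intro j hj
    simp only [Finset.mem_filter, Finset.mem_range] at hj
    obtain ⟨hjn, hrk, hpm⟩ := hj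
    obtain ⟨e1, e2⟩ := ndivmod_unique (l := k) (x := j / l * k + j % l)
      (b := j / l) (r := j % l) rfl hrk
    beta_reduce
    rw [e1, e2]
    obtain ⟨a1, a2⟩ := ndiv_self_eq (x := j) hl
    generalize j / l * l = A at a1 ⊢
    omega
  · intro i hi
    simp only [Finset.mem_filter, Finset.mem_range] at hi
    rfl

end ArithCount

section ArithMono

lemma psi_anti {l k k' i : ℕ} (hk' : 0 < k') (hk'k : k' ≤ k) (hkl : k ≤ l) :
    i / k * l + i % k ≤ i / k' * l + i % k' := by
  have hk : 0 < k := lt_of_lt_of_le hk' hk'k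
  have hdd : i / k ≤ i / k' := Nat.div_le_div_left hk'k hk'
  obtain ⟨a1, a2⟩ := ndiv_self_eq (x := i) hk
  obtain ⟨b1, b2⟩ := ndiv_self_eq (x := i) hk'
  rcases eq_or_lt_of_le hdd with heq | hlt
  · rw [← heq] at b1 ⊢
    have hmm : i / k * k' ≤ i / k * k := Nat.mul_le_mul_left _ hk'k
    have hmods : i % k ≤ i % k' := by
      generalize i / k * k' = A at b1 hmm
      generalize i / k * k = B at a1 hmm
      omega
    generalize i / k * l = P
    omega
  · have e1 : (i / k + 1) * l ≤ i / k' * l := Nat.mul_le_mul_right _ (by omega)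
    have e2 : (i / k + 1) * l = i / k * l + l := by ring
    have hr : i % k < l := lt_of_lt_of_le (Nat.mod_lt _ hk) hkl
    generalize i / k * l = P at e2 ⊢
    generalize (i / k + 1) * l = B at e1 e2
    generalize i / k' * l = C at e1 ⊢
    omega

lemma v_anti {n l k k' i : ℕ} (hk : 0 < k) (hkk' : k ≤ k') (hl : 0 < l) :
    min (i / k' * l + min (i % k' + 1) l) n ≤ min (i / k * l + min (i % k + 1) l) n := by
  have hk'0 : 0 < k' := lt_of_lt_of_le hk hkk'
  have hdd : i / k' ≤ i / k := Nat.div_le_div_left hkk' hk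
  obtain ⟨a1, a2⟩ := ndiv_self_eq (x := i) hk
  obtain ⟨b1, b2⟩ := ndiv_self_eq (x := i) hk'0
  rcases eq_or_lt_of_le hdd with heq | hlt
  · rw [heq] at b1 ⊢
    have hmm : i / k * k ≤ i / k * k' := Nat.mul_le_mul_left _ hkk'
    have hmods : i % k' ≤ i % k := by
      generalize i / k * k' = A at b1 hmm
      generalize i / k * k = B at a1 hmm
      omega
    generalize i / k * l = P
    omega
  · have e1 : (i / k' + 1) * l ≤ i / k * l := Nat.mul_le_mul_right _ (by omega)
    have e2 : (i / k' + 1) * l = i / k' * l + l := by ring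
    generalize i / k' * l = P at e2 ⊢
    generalize (i / k' + 1) * l = B at e1 e2
    generalize i / k * l = C at e1 ⊢
    omega

lemma w_mono {m l k k' j : ℕ} (hk'k : k' ≤ k) :
    min (j / l * k' + min (j % l + 1) k') m ≤ min (j / l * k + min (j % l + 1) k) m := by
  have hmm : j / l * k' ≤ j / l * k := Nat.mul_le_mul_left _ hk'k
  generalize j / l * k' = A at hmm ⊢
  generalize j / l * k = B at hmm ⊢
  omega

lemma cnt_mono_case1 {n m l k k' : ℕ} (hl : 0 < l) (hk' : 0 < k') (hk'k : k' ≤ k)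
    (hkl : k ≤ l) : cntP n m l k' ≤ cntP n m l k := by
  have hk : 0 < k := lt_of_lt_of_le hk' hk'k
  rw [cntP_eq_hosp hl hk', cntP_eq_hosp hl hk]
  apply Finset.card_le_card
  intro i hi
  simp only [Finset.mem_filter, Finset.mem_range] at hi ⊢
  obtain ⟨him, hr', hp'⟩ := hi
  have hψ := psi_anti (i := i) hk' hk'k hkl
  refine ⟨him, lt_of_lt_of_le (Nat.mod_lt _ hk) hkl, ?_⟩
  generalize i / k * l = P at hψ ⊢
  generalize i / k' * l = Q at hψ hp'
  omega

lemma cnt_mono_case2 {n m l k k' : ℕ} (hl : 0 < l) (hlk : l ≤ k) (hkk' : k ≤ k') :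
    cntP n m l k' ≤ cntP n m l k := by
  have hk : 0 < k := lt_of_lt_of_le hl hlk
  have hk'0 : 0 < k' := lt_of_lt_of_le hk hkk'
  rw [cntP_eq_doc hl hk, cntP_eq_doc hl hk'0]
  apply Finset.card_le_card
  intro j hj
  simp only [Finset.mem_filter, Finset.mem_range] at hj ⊢
  obtain ⟨hjn, hr', hp'⟩ := hj
  have hmm : j / l * k ≤ j / l * k' := Nat.mul_le_mul_left _ hkk'
  refine ⟨hjn, lt_of_lt_of_le (Nat.mod_lt _ hl) hlk, ?_⟩
  generalize j / l * k = A at hmm ⊢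
  generalize j / l * k' = B at hmm hp'
  omega

lemma blk_mono_case1 {n m l k k' : ℕ} (hl : 0 < l) (hk' : 0 < k') (hk'k : k' ≤ k)
    (hkl : k ≤ l) : blkPc n m l k ≤ blkPc n m l k' := by
  have hk : 0 < k := lt_of_lt_of_le hk' hk'k
  unfold blkPc
  apply Finset.card_le_card
  intro q hq
  obtain ⟨j, i⟩ := q
  simp only [Finset.mem_filter, Finset.mem_product, Finset.mem_range] at hq ⊢
  obtain ⟨⟨hjn, him⟩, hB⟩ := hq
  refine ⟨⟨hjn, him⟩, ?_⟩
  rw [blkP_swap] at hB ⊢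
  rw [blkP_iff hk hkl him hjn] at hB
  rw [blkP_iff hk' (le_trans hk'k hkl) him hjn]
  obtain ⟨hnd, hw⟩ := hB
  constructor
  · rintro ⟨hr', hp'⟩
    have h2 : ¬ (j / l * k + j % l < m) := fun hc => hnd ⟨lt_of_lt_of_le hr' hk'k, hc⟩
    have hr1 : j % l + 1 ≤ k := by omega
    generalize j / l * k = A at h2 hw
    omega
  · exact le_trans (w_mono hk'k) hw

lemma blk_mono_case2 {n m l k k' : ℕ} (hl : 0 < l) (hlk : l ≤ k) (hkk' : k ≤ k') :
    blkPc n m l k ≤ blkPc n m l k' := by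
  have hk : 0 < k := lt_of_lt_of_le hl hlk
  have hk'0 : 0 < k' := lt_of_lt_of_le hk hkk'
  have hlk' : l ≤ k' := le_trans hlk hkk'
  have h1 := blkPc_plus (n := n) (m := m) hl hlk
  have h2 := blkPc_plus (n := n) (m := m) hl hlk'
  have h3 : (∑ i ∈ Finset.range m, (n - min (i / k * l + min (i % k + 1) l) n))
      ≤ ∑ i ∈ Finset.range m, (n - min (i / k' * l + min (i % k' + 1) l) n) := by
    apply Finset.sum_le_sum
    intro i _
    have := v_anti (n := n) (i := i) hk hkk' hl
    omega
  have h4 : dSum n m l k' ≤ dSum n m l k := by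
    rw [dSum_eq_doc hl hk, dSum_eq_doc hl hk'0]
    apply Finset.sum_le_sum
    intro j _
    by_cases hA : j % l < k' ∧ j / l * k' + j % l < m
    · have hBh : j % l < k ∧ j / l * k + j % l < m := by
        obtain ⟨-, hp⟩ := hA
        have hmm : j / l * k ≤ j / l * k' := Nat.mul_le_mul_left _ hkk'
        refine ⟨lt_of_lt_of_le (Nat.mod_lt _ hl) hlk, ?_⟩
        generalize j / l * k = A at hmm ⊢
        generalize j / l * k' = B at hmm hp
        omega
      rw [if_pos hA, if_pos hBh]
    · rw [if_neg hA]
      exact Nat.zero_le _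
  omega

end ArithMono

section Bridge
variable {D H : Type*} [Fintype D] [Fintype H] [DecidableEq D] [DecidableEq H]
variable {M : Market D H}

lemma card_transfer (hM : CommonPrefs M) (d₀ : D) (h₀ : H) (p : ℕ → ℕ → Prop)
    [∀ a b, Decidable (p a b)] :
    ((univ : Finset (D × H)).filter fun q =>
        p (rpos (M.rankHD h₀) q.1) (rpos (M.rankDH d₀) q.2)).card
      = ((Finset.range (Fintype.card D) ×ˢ Finset.range (Fintype.card H)).filter
          fun q => p q.1 q.2).card := by
  have injD : Function.Injective (M.rankHD h₀) := hM.1.2 h₀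
  have injH : Function.Injective (M.rankDH d₀) := hM.1.1 d₀
  apply Finset.card_nbij (fun q => (rpos (M.rankHD h₀) q.1, rpos (M.rankDH d₀) q.2))
  · intro q hq
    simp only [Finset.mem_coe, Finset.mem_filter, Finset.mem_univ, true_and] at hq
    simp only [Finset.mem_coe, Finset.mem_filter, Finset.mem_product, Finset.mem_range]
    exact ⟨⟨rpos_lt_card _, rpos_lt_card _⟩, hq⟩
  · intro q1 _ q2 _ heq
    simp only [Prod.mk.injEq] at heq
    exact Prod.ext (rpos_inj injD heq.1) (rpos_inj injH heq.2)
  · intro q hq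
    simp only [Finset.coe_filter, Set.mem_setOf_eq, Finset.mem_product, Finset.mem_range] at hq
    obtain ⟨⟨ha, hb⟩, hp⟩ := hq
    obtain ⟨d, hd⟩ := rpos_surj injD ha
    obtain ⟨h, hh⟩ := rpos_surj injH hb
    refine ⟨(d, h), ?_, Prod.ext hd hh⟩
    simp only [Finset.coe_filter, Set.mem_setOf_eq, Finset.mem_univ, true_and]
    rw [hd, hh]
    exact hp

lemma ikCard_eq (hM : CommonPrefs M) (d₀ : D) (h₀ : H) {l k : ℕ} (hl : 0 < l) (hk : 0 < k) :
    (ikMatching M (fun _ => l) (fun _ => k)).card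
      = cntP (Fintype.card D) (Fintype.card H) l k := by
  rw [ikMatching_eq hM d₀ h₀ hl hk]
  exact card_transfer hM d₀ h₀ (fun j i => MatchP l k j i)

lemma blocks_iff (hM : CommonPrefs M) (d₀ : D) (h₀ : H) {l k : ℕ} (hl : 0 < l) (hk : 0 < k)
    (d : D) (h : H) :
    Blocks M (ikMatching M (fun _ => l) (fun _ => k)) d h
      ↔ BlkP (Fintype.card D) (Fintype.card H) l k
          (rpos (M.rankHD h₀) d) (rpos (M.rankDH d₀) h) := by
  have injD : Function.Injective (M.rankHD h₀) := hM.1.2 h₀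
  have injH : Function.Injective (M.rankDH d₀) := hM.1.1 d₀
  rw [ikMatching_eq hM d₀ h₀ hl hk]
  unfold Blocks
  constructor
  · rintro ⟨-, -, hnm, hDlt, hHlt⟩
    refine ⟨?_, ?_, ?_⟩
    · intro hmp
      exact hnm (by simpa only [Finset.mem_filter, Finset.mem_univ, true_and] using hmp)
    · intro i' hi'm hmp
      obtain ⟨h', rfl⟩ := rpos_surj injH hi'm
      have hmem : (d, h') ∈ (univ.filter fun p : D × H =>
          rpos (M.rankHD h₀) p.1 / l = rpos (M.rankDH d₀) p.2 / k ∧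
            rpos (M.rankHD h₀) p.1 % l = rpos (M.rankDH d₀) p.2 % k) := by
        simpa only [Finset.mem_filter, Finset.mem_univ, true_and] using hmp
      have hlt := hDlt h' hmem
      rw [hM.2.1 d d₀] at hlt
      exact (rpos_lt_iff (f := M.rankDH d₀)).1 hlt
    · intro j' hj'n hmp
      obtain ⟨d', rfl⟩ := rpos_surj injD hj'n
      have hmem : (d', h) ∈ (univ.filter fun p : D × H =>
          rpos (M.rankHD h₀) p.1 / l = rpos (M.rankDH d₀) p.2 / k ∧
            rpos (M.rankHD h₀) p.1 % l = rpos (M.rankDH d₀) p.2 % k) := by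
        simpa only [Finset.mem_filter, Finset.mem_univ, true_and] using hmp
      have hlt := hHlt d' hmem
      rw [hM.2.2.1 h h₀] at hlt
      exact (rpos_lt_iff (f := M.rankHD h₀)).1 hlt
  · rintro ⟨hnm, hAi, hAj⟩
    refine ⟨accD_true hM d h, accH_true hM d h, ?_, ?_, ?_⟩
    · intro hmem
      apply hnm
      simpa only [Finset.mem_filter, Finset.mem_univ, true_and] using hmem
    · intro h' hmem
      simp only [Finset.mem_filter, Finset.mem_univ, true_and] at hmem
      have hlt := hAi (rpos (M.rankDH d₀) h') (rpos_lt_card h') hmem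
      have h2 := (rpos_lt_iff (f := M.rankDH d₀)).2 hlt
      rw [show M.rankDH d₀ = M.rankDH d from (hM.2.1 d d₀).symm] at h2
      exact h2
    · intro d' hmem
      simp only [Finset.mem_filter, Finset.mem_univ, true_and] at hmem
      have hlt := hAj (rpos (M.rankHD h₀) d') (rpos_lt_card d') hmem
      have h2 := (rpos_lt_iff (f := M.rankHD h₀)).2 hlt
      rw [show M.rankHD h₀ = M.rankHD h from (hM.2.2.1 h h₀).symm] at h2
      exact h2

lemma blockingCount_eq (hM : CommonPrefs M) (d₀ : D) (h₀ : H) {l k : ℕ}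
    (hl : 0 < l) (hk : 0 < k) :
    blockingCount M (ikMatching M (fun _ => l) (fun _ => k))
      = blkPc (Fintype.card D) (Fintype.card H) l k := by
  unfold blockingCount
  have hstep : ((univ : Finset (D × H)).filter fun p =>
        Blocks M (ikMatching M (fun _ => l) (fun _ => k)) p.1 p.2)
      = (univ : Finset (D × H)).filter fun q =>
          BlkP (Fintype.card D) (Fintype.card H) l k
            (rpos (M.rankHD h₀) q.1) (rpos (M.rankDH d₀) q.2) := by
    apply Finset.filter_congr
    intro q _
    exact blocks_iff hM d₀ h₀ hl hk q.1 q.2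
  rw [hstep]
  exact card_transfer hM d₀ h₀ (fun j i => BlkP (Fintype.card D) (Fintype.card H) l k j i)

end Bridge

section Degenerate
variable {D H : Type*} [Fintype D] [Fintype H] [DecidableEq D] [DecidableEq H]
variable {M : Market D H}

lemma finalMatch_empty : finalMatch M (∅ : Finset (H × D)) = ∅ := by
  have hd : ∀ (S : Finset (D × H)) (d : D), dProps M (∅ : Finset (H × D)) S d = ∅ := by
    intro S d
    unfold dProps
    have hbase : ((univ : Finset H).filter fun h => (h, d) ∈ (∅ : Finset (H × D)) ∧ (d, h) ∉ S)
        = ∅ := by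
      simp
    rw [hbase, topN_empty]
  unfold finalMatch
  rw [Finset.eq_empty_iff_forall_notMem]
  intro p hp
  simp only [Finset.mem_filter] at hp
  rw [hd] at hp
  exact Finset.notMem_empty _ hp.2.1

lemma ikMatching_l0 (κ : D → ℕ) : ikMatching M (fun _ => (0 : ℕ)) κ = ∅ := by
  have hp0 : ∀ (R : Finset (H × D)) (h : H), hProps M (fun _ => (0 : ℕ)) R h = ∅ := by
    intro R h
    unfold hProps
    exact topN_zero _
  have hint : interviews M (fun _ => (0 : ℕ)) κ = ∅ := by
    unfold interviews
    rw [Finset.eq_empty_iff_forall_notMem]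
    intro p hp
    simp only [Finset.mem_filter] at hp
    rw [hp0] at hp
    exact Finset.notMem_empty _ hp.2.1
  unfold ikMatching
  rw [hint, finalMatch_empty]

lemma ikMatching_k0 (ι : H → ℕ) : ikMatching M ι (fun _ => (0 : ℕ)) = ∅ := by
  have hp0 : ∀ (R : Finset (H × D)) (d : D), dKeeps M ι (fun _ => (0 : ℕ)) R d = ∅ := by
    intro R d
    unfold dKeeps
    exact topN_zero _
  have hint : interviews M ι (fun _ => (0 : ℕ)) = ∅ := by
    unfold interviews
    rw [Finset.eq_empty_iff_forall_notMem]
    intro p hp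
    simp only [Finset.mem_filter] at hp
    rw [hp0] at hp
    exact Finset.notMem_empty _ hp.2.2
  unfold ikMatching
  rw [hint, finalMatch_empty]

lemma blockingCount_empty (hM : CommonPrefs M) :
    blockingCount M (∅ : Finset (D × H)) = (univ : Finset (D × H)).card := by
  unfold blockingCount
  congr 1
  apply Finset.filter_true_of_mem
  intro p _
  exact ⟨accD_true hM p.1 p.2, accH_true hM p.1 p.2, Finset.notMem_empty _,
    fun h' hm => absurd hm (Finset.notMem_empty _),
    fun d' hm => absurd hm (Finset.notMem_empty _)⟩

lemma blockingCount_le_univ (M : Market D H) (μ : Finset (D × H)) :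
    blockingCount M μ ≤ (univ : Finset (D × H)).card :=
  Finset.card_le_card (Finset.filter_subset _ _)

end Degenerate


/-- Fix hospitals' interview capacity at `l`, common preferences. If
`k' < k ≤ l` or `l ≤ k < k'`, then the `(l,k')`-matching has at least as many
blocking pairs and a weakly lower match rate than the `(l,k)`-matching. -/
theorem target_interview_cap
    (M : Market D H) (hM : CommonPrefs M) (l k k' : ℕ)
    (hcase : (k' < k ∧ k ≤ l) ∨ (l ≤ k ∧ k < k')) :
    blockingCount M (ikMatching M (fun _ => l) (fun _ => k)) ≤
      blockingCount M (ikMatching M (fun _ => l) (fun _ => k')) ∧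
    ((ikMatching M (fun _ => l) (fun _ => k')).card : ℚ) /
        (min (Fintype.card D) (Fintype.card H)) ≤
      ((ikMatching M (fun _ => l) (fun _ => k)).card : ℚ) /
        (min (Fintype.card D) (Fintype.card H)) := by
  by_cases hD0 : Fintype.card D = 0
  · haveI hde : IsEmpty D := Fintype.card_eq_zero_iff.mp hD0
    haveI : IsEmpty (D × H) := ⟨fun p => hde.false p.1⟩
    have hall : ∀ μ : Finset (D × H), μ = ∅ := fun μ => Finset.eq_empty_of_isEmpty μ
    constructor
    · unfold blockingCount
      rw [hall (univ : Finset (D × H))]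
      simp
    · rw [hall (ikMatching M (fun _ => l) (fun _ => k)),
        hall (ikMatching M (fun _ => l) (fun _ => k'))]
  by_cases hH0 : Fintype.card H = 0
  · haveI hhe : IsEmpty H := Fintype.card_eq_zero_iff.mp hH0
    haveI : IsEmpty (D × H) := ⟨fun p => hhe.false p.2⟩
    have hall : ∀ μ : Finset (D × H), μ = ∅ := fun μ => Finset.eq_empty_of_isEmpty μ
    constructor
    · unfold blockingCount
      rw [hall (univ : Finset (D × H))]
      simp
    · rw [hall (ikMatching M (fun _ => l) (fun _ => k)),
        hall (ikMatching M (fun _ => l) (fun _ => k'))]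
  have hn : 0 < Fintype.card D := Nat.pos_of_ne_zero hD0
  have hm : 0 < Fintype.card H := Nat.pos_of_ne_zero hH0
  obtain ⟨d₀⟩ := Fintype.card_pos_iff.mp hn
  obtain ⟨h₀⟩ := Fintype.card_pos_iff.mp hm
  have hdenpos : (0 : ℚ) < ((min (Fintype.card D) (Fintype.card H) : ℕ) : ℚ) := by
    have h1 : 0 < min (Fintype.card D) (Fintype.card H) := lt_min hn hm
    exact_mod_cast h1
  rcases hcase with ⟨hk'k, hkl⟩ | ⟨hlk, hkk'⟩
  · -- k' < k ≤ l
    have hk : 0 < k := by omega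
    have hl : 0 < l := by omega
    by_cases hk'0 : k' = 0
    · subst hk'0
      have hzero : ikMatching M (fun _ => l) (fun _ => (0 : ℕ)) = ∅ := ikMatching_k0 _
      constructor
      · rw [hzero, blockingCount_empty hM]
        exact blockingCount_le_univ M _
      · rw [hzero]
        simp only [Finset.card_empty, Nat.cast_zero, zero_div]
        positivity
    · have hk' : 0 < k' := Nat.pos_of_ne_zero hk'0
      constructor
      · rw [blockingCount_eq hM d₀ h₀ hl hk, blockingCount_eq hM d₀ h₀ hl hk']
        exact blk_mono_case1 hl hk' (le_of_lt hk'k) hkl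
      · rw [ikCard_eq hM d₀ h₀ hl hk, ikCard_eq hM d₀ h₀ hl hk']
        have hcnt := cnt_mono_case1 (n := Fintype.card D) (m := Fintype.card H)
          hl hk' (le_of_lt hk'k) hkl
        exact div_le_div_of_nonneg_right (by exact_mod_cast hcnt) hdenpos.le
  · -- l ≤ k < k'
    by_cases hl0 : l = 0
    · subst hl0
      rw [ikMatching_l0 (M := M) (fun _ => k), ikMatching_l0 (M := M) (fun _ => k')]
      exact ⟨le_refl _, le_refl _⟩
    have hl : 0 < l := Nat.pos_of_ne_zero hl0
    have hk : 0 < k := lt_of_lt_of_le hl hlk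
    have hk' : 0 < k' := by omega
    constructor
    · rw [blockingCount_eq hM d₀ h₀ hl hk, blockingCount_eq hM d₀ h₀ hl hk']
      exact blk_mono_case2 hl hlk (le_of_lt hkk')
    · rw [ikCard_eq hM d₀ h₀ hl hk, ikCard_eq hM d₀ h₀ hl hk']
      have hcnt := cnt_mono_case2 (n := Fintype.card D) (m := Fintype.card H)
        hl hlk (le_of_lt hkk')
      exact div_le_div_of_nonneg_right (by exact_mod_cast hcnt) hdenpos.le
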